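/- Suppose all time windows satisfy 0 ≤ t̲_i ≤ t̄_i ≤ T and the constant R satisfies ‖(p̲_j + (t_j − t̲_j)v_j) − (p̲_i + (t_i − t̲_i)v_i)‖₂ ≤ R for all nodes i, j ∈ V and all t_i ∈ [t̲_i, t̄_i], t_j ∈ [t̲_j, t̄_j]. Then the optimal value of the big-M MICP formulation of the MT-TSP equals the optimal value of the biconvex formulation; that is, the infimum of Σ_{e ∈ E} l̃_e over all points feasible for the big-M MICP equals the infimum of Σ_{e ∈ E} l_e over all points feasible for the biconvex formulation. -/

import Mathlib

open Pointwise

/-- Nodes of the MT-TSP graph: the depot `s`, its copy `s'`, and the targets. -/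
inductive Node (α : Type) where
  | s : Node α
  | s' : Node α
  | tar : α → Node α
  deriving DecidableEq, Fintype

/-- The edge set `E` of the MT-TSP graph: all edges from `s` to each target, between
every ordered pair of distinct targets, and from each target to `s'`. -/
def isEdge {α : Type} [DecidableEq α] : Node α × Node α → Bool
  | (Node.s, Node.tar _) => true
  | (Node.tar a, Node.tar b) => a != b
  | (Node.tar _, Node.s') => true
  | _ => false

/-- The edge set as a finset. -/
def Efin (α : Type) [Fintype α] [DecidableEq α] : Finset (Node α × Node α) :=
  Finset.univ.filter (fun e => isEdge e = true)

/-- Edges of `E` entering node `i`. -/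
def Ein {α : Type} [Fintype α] [DecidableEq α] (i : Node α) : Finset (Node α × Node α) :=
  (Efin α).filter (fun e => e.2 = i)

/-- Edges of `E` leaving node `i`. -/
def Eout {α : Type} [Fintype α] [DecidableEq α] (i : Node α) : Finset (Node α × Node α) :=
  (Efin α).filter (fun e => e.1 = i)

/-- The trajectory segment of a node with initial position `pbar` at time `tlo`, constant
velocity `v`, and time window `[tlo, thi]`, in space-time `ℝ² × ℝ = ℝ³`. -/
def traj (pbar v : ℝ × ℝ) (tlo thi : ℝ) : Set ((ℝ × ℝ) × ℝ) :=
  {q | ∃ t ∈ Set.Icc tlo thi, q = (pbar + (t - tlo) • v, t)}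

/-- The perspective of a set `X`: `X̃ := {(x, λ) : λ ≥ 0, x ∈ λ • X}`. -/
def perspective (X : Set ((ℝ × ℝ) × ℝ)) : Set (((ℝ × ℝ) × ℝ) × ℝ) :=
  {q | 0 ≤ q.2 ∧ q.1 ∈ q.2 • X}

/-- Feasibility for the MICP-GCS formulation of the MT-TSP: binary edge variables `y`,
edge variables `z, z'` (space-time points scaled by `y`), cost addends `l`, subject to
the flow constraints, the augmented flow conservation
`Σ_{e ∈ E_in(i)} (z'_{e,t}, y_e) = Σ_{e ∈ E_out(i)} (z_{e,t}, y_e)` at each target,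
the perspective constraints, and the speed and cone constraints. -/
def GCSFeasible {α : Type} [Fintype α] [DecidableEq α]
    (pbar vel : Node α → ℝ × ℝ) (tlo thi : Node α → ℝ) (vmax : ℝ)
    (y : Node α × Node α → ℝ) (z z' : Node α × Node α → (ℝ × ℝ) × ℝ)
    (l : Node α × Node α → ℝ) : Prop :=
  (∀ e ∈ Efin α, y e = 0 ∨ y e = 1) ∧
  (∑ e ∈ Eout (Node.s : Node α), y e = 1) ∧
  (∑ e ∈ Ein (Node.s' : Node α), y e = 1) ∧
  (∀ a : α, ∑ e ∈ Ein (Node.tar a), y e = 1) ∧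
  (∀ a : α, ∑ e ∈ Ein (Node.tar a), (z' e).2 = ∑ e ∈ Eout (Node.tar a), (z e).2) ∧
  (∀ a : α, ∑ e ∈ Ein (Node.tar a), y e = ∑ e ∈ Eout (Node.tar a), y e) ∧
  (∀ e ∈ Efin α,
    (z e, y e) ∈ perspective (traj (pbar e.1) (vel e.1) (tlo e.1) (thi e.1)) ∧
    (z' e, y e) ∈ perspective (traj (pbar e.2) (vel e.2) (tlo e.2) (thi e.2))) ∧
  (∀ e ∈ Efin α,
    0 ≤ l e ∧ l e ≤ vmax * ((z' e).2 - (z e).2) ∧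
    ((z' e).1.1 - (z e).1.1) ^ 2 + ((z' e).1.2 - (z e).1.2) ^ 2 ≤ (l e) ^ 2)

/-- Feasibility for the biconvex formulation of the MT-TSP: space-time points `(pᵢ, tᵢ)`
for all nodes, binary edge variables `y`, edge variables `z, z'`, and cost addends `l`,
subject to the flow constraints, `(pᵢ, tᵢ) ∈ Xᵢ`, the bilinear constraints
`z_e = y_e • (pᵢ, tᵢ)`, `z'_e = y_e • (pⱼ, tⱼ)`, and the speed and cone constraints. -/
def BiconvexFeasible {α : Type} [Fintype α] [DecidableEq α]
    (pbar vel : Node α → ℝ × ℝ) (tlo thi : Node α → ℝ) (vmax : ℝ)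
    (pt : Node α → (ℝ × ℝ) × ℝ) (y : Node α × Node α → ℝ)
    (z z' : Node α × Node α → (ℝ × ℝ) × ℝ) (l : Node α × Node α → ℝ) : Prop :=
  (∀ e ∈ Efin α, y e = 0 ∨ y e = 1) ∧
  (∑ e ∈ Eout (Node.s : Node α), y e = 1) ∧
  (∑ e ∈ Ein (Node.s' : Node α), y e = 1) ∧
  (∀ a : α, ∑ e ∈ Ein (Node.tar a), y e = 1) ∧
  (∀ a : α, ∑ e ∈ Ein (Node.tar a), y e = ∑ e ∈ Eout (Node.tar a), y e) ∧
  (∀ i : Node α, pt i ∈ traj (pbar i) (vel i) (tlo i) (thi i)) ∧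
  (∀ e ∈ Efin α, z e = y e • pt e.1 ∧ z' e = y e • pt e.2) ∧
  (∀ e ∈ Efin α,
    0 ≤ l e ∧ l e ≤ vmax * ((z' e).2 - (z e).2) ∧
    ((z' e).1.1 - (z e).1.1) ^ 2 + ((z' e).1.2 - (z e).1.2) ^ 2 ≤ (l e) ^ 2)

/-- Feasibility for the big-M MICP formulation (Stieber et al.) of the MT-TSP:
visit times `t` within the time windows, binary edge variables `y` satisfying the flow
constraints, and for each edge `e = (i, j)` the auxiliary variables
`l̃_e, l̄_e ≥ 0` and `l_{e,x}, l_{e,y}` (coordinate differences of the node positions at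
the visit times), subject to the big-M speed constraint
`l̃_e ≤ v_max(t_j − t_i + T(1 − y_e))`, the big-M cone shift `l̄_e = l̃_e + R(1 − y_e)`,
and the second-order cone constraint `l_{e,x}² + l_{e,y}² ≤ l̄_e²`. -/
def MICPFeasible {α : Type} [Fintype α] [DecidableEq α]
    (pbar vel : Node α → ℝ × ℝ) (tlo thi : Node α → ℝ) (vmax T R : ℝ)
    (t : Node α → ℝ) (y : Node α × Node α → ℝ)
    (ltil lbar lx ly : Node α × Node α → ℝ) : Prop :=
  (∀ i : Node α, tlo i ≤ t i ∧ t i ≤ thi i) ∧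
  (∀ e ∈ Efin α, y e = 0 ∨ y e = 1) ∧
  (∑ e ∈ Eout (Node.s : Node α), y e = 1) ∧
  (∑ e ∈ Ein (Node.s' : Node α), y e = 1) ∧
  (∀ a : α, ∑ e ∈ Ein (Node.tar a), y e = 1) ∧
  (∀ a : α, ∑ e ∈ Ein (Node.tar a), y e = ∑ e ∈ Eout (Node.tar a), y e) ∧
  (∀ e ∈ Efin α,
    lx e = ((pbar e.2).1 + (t e.2 - tlo e.2) * (vel e.2).1)
            - ((pbar e.1).1 + (t e.1 - tlo e.1) * (vel e.1).1) ∧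
    ly e = ((pbar e.2).2 + (t e.2 - tlo e.2) * (vel e.2).2)
            - ((pbar e.1).2 + (t e.1 - tlo e.1) * (vel e.1).2) ∧
    0 ≤ ltil e ∧ 0 ≤ lbar e ∧
    ltil e ≤ vmax * (t e.2 - t e.1 + T * (1 - y e)) ∧
    lbar e = ltil e + R * (1 - y e) ∧
    (lx e) ^ 2 + (ly e) ^ 2 ≤ (lbar e) ^ 2)

lemma inf_eq_aux (A B : Set ℝ)
    (hA0 : ∀ a ∈ A, (0:ℝ) ≤ a) (hB0 : ∀ b ∈ B, (0:ℝ) ≤ b)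
    (hAB : ∀ a ∈ A, ∃ b ∈ B, b ≤ a) (hBA : ∀ b ∈ B, ∃ a ∈ A, a ≤ b) :
    sInf A = sInf B := by
  rcases A.eq_empty_or_nonempty with hA | hA
  · rcases B.eq_empty_or_nonempty with hB | hB
    · rw [hA, hB]
    · obtain ⟨b, hb⟩ := hB
      obtain ⟨a, ha, _⟩ := hBA b hb
      rw [hA] at ha; exact absurd ha (Set.notMem_empty a)
  · obtain ⟨a, ha⟩ := hA
    obtain ⟨b, hb, _⟩ := hAB a ha
    have hAbdd : BddBelow A := ⟨0, fun x hx => hA0 x hx⟩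
    have hBbdd : BddBelow B := ⟨0, fun x hx => hB0 x hx⟩
    apply le_antisymm
    · apply le_csInf ⟨b, hb⟩
      intro c hc
      obtain ⟨a', ha', hle⟩ := hBA c hc
      exact le_trans (csInf_le hAbdd ha') hle
    · apply le_csInf ⟨a, ha⟩
      intro c hc
      obtain ⟨b', hb', hle⟩ := hAB c hc
      exact le_trans (csInf_le hBbdd hb') hle

/-- If all time windows satisfy `0 ≤ t̲ᵢ ≤ t̄ᵢ ≤ T` and the constant `R`
bounds the distance between the positions of any two nodes at any times within their
time windows, then the optimal value of the big-M MICP formulation of the MT-TSP equals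
the optimal value of the biconvex formulation. -/
theorem stmt_14 {α : Type} [Fintype α] [DecidableEq α] [Nonempty α]
    (pbar vel : Node α → ℝ × ℝ) (tlo thi : Node α → ℝ)
    (vmax T R : ℝ) (hvmax : 0 < vmax) (hT : 0 < T)
    (hwin : ∀ i : Node α, 0 ≤ tlo i ∧ tlo i ≤ thi i ∧ thi i ≤ T)
    (hR : ∀ i j : Node α, ∀ ti ∈ Set.Icc (tlo i) (thi i), ∀ tj ∈ Set.Icc (tlo j) (thi j),
      Real.sqrt ((((pbar j).1 + (tj - tlo j) * (vel j).1)
            - ((pbar i).1 + (ti - tlo i) * (vel i).1)) ^ 2 +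
          (((pbar j).2 + (tj - tlo j) * (vel j).2)
            - ((pbar i).2 + (ti - tlo i) * (vel i).2)) ^ 2) ≤ R) :
    sInf {c : ℝ | ∃ (t : Node α → ℝ) (y : Node α × Node α → ℝ)
        (ltil lbar lx ly : Node α × Node α → ℝ),
        MICPFeasible pbar vel tlo thi vmax T R t y ltil lbar lx ly ∧
        c = ∑ e ∈ Efin α, ltil e} =
    sInf {c : ℝ | ∃ (pt : Node α → (ℝ × ℝ) × ℝ) (y : Node α × Node α → ℝ)
        (z z' : Node α × Node α → (ℝ × ℝ) × ℝ) (l : Node α × Node α → ℝ),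
        BiconvexFeasible pbar vel tlo thi vmax pt y z z' l ∧ c = ∑ e ∈ Efin α, l e} := by
  have hvmax' : (0:ℝ) ≤ vmax := le_of_lt hvmax
  have hR0 : (0:ℝ) ≤ R := by
    have := hR (Node.s) (Node.s) (tlo Node.s) ⟨le_refl _, (hwin Node.s).2.1⟩
      (tlo Node.s) ⟨le_refl _, (hwin Node.s).2.1⟩
    exact le_trans (Real.sqrt_nonneg _) this
  apply inf_eq_aux
  · rintro c ⟨t, y, ltil, lbar, lx, ly, hF, rfl⟩
    exact Finset.sum_nonneg fun e he => (hF.2.2.2.2.2.2 e he).2.2.1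
  · rintro c ⟨pt, y, z, z', l, hF, rfl⟩
    exact Finset.sum_nonneg fun e he => (hF.2.2.2.2.2.2.2 e he).1
  · -- MICP → Biconvex
    rintro c ⟨t, y, ltil, lbar, lx, ly, ⟨h1, h2, h3, h4, h5, h6, h7⟩, rfl⟩
    set pt : Node α → (ℝ × ℝ) × ℝ := fun i => (pbar i + (t i - tlo i) • vel i, t i) with hpt
    refine ⟨∑ e ∈ Efin α, y e * ltil e,
      ⟨pt, y, fun e => y e • pt e.1, fun e => y e • pt e.2, fun e => y e * ltil e,
        ⟨h2, h3, h4, h5, h6, ?_, fun e _ => ⟨rfl, rfl⟩, ?_⟩, rfl⟩, ?_⟩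
    · intro i
      exact ⟨t i, ⟨(h1 i).1, (h1 i).2⟩, rfl⟩
    · intro e he
      obtain ⟨hlx, hly, hl0, hlb0, hsp, hlbe, hcone⟩ := h7 e he
      rcases h2 e he with hy | hy
      · simp only [hy, zero_smul, zero_mul, hpt]
        norm_num
      · rw [hy] at hsp hlbe
        simp only [hy, one_smul, one_mul, hpt, Prod.fst_add, Prod.snd_add,
          Prod.smul_fst, Prod.smul_snd, smul_eq_mul]
        refine ⟨hl0, ?_, ?_⟩
        · have heq : vmax * (t e.2 - t e.1 + T * (1 - 1)) = vmax * (t e.2 - t e.1) := by ring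
          rw [heq] at hsp
          exact hsp
        · rw [← hlx, ← hly]
          have hlb : lbar e = ltil e := by rw [hlbe]; ring
          rw [← hlb]
          exact hcone
    · apply Finset.sum_le_sum
      intro e he
      rcases h2 e he with hy | hy
      · rw [hy, zero_mul]; exact (h7 e he).2.2.1
      · rw [hy, one_mul]
  · -- Biconvex → MICP
    rintro c ⟨pt, y, z, z', l, ⟨h1, h2, h3, h4, h5, h6, h7, h8⟩, rfl⟩
    have hwinpt : ∀ i : Node α, tlo i ≤ (pt i).2 ∧ (pt i).2 ≤ thi i := by
      intro i
      obtain ⟨τ, hτ, hq⟩ := h6 i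
      rw [hq]; exact ⟨hτ.1, hτ.2⟩
    have hpos : ∀ i : Node α, (pt i).1 = pbar i + ((pt i).2 - tlo i) • vel i := by
      intro i
      obtain ⟨τ, hτ, hq⟩ := h6 i
      rw [hq]
    set t : Node α → ℝ := fun i => (pt i).2 with ht
    set lx : Node α × Node α → ℝ := fun e =>
      ((pbar e.2).1 + (t e.2 - tlo e.2) * (vel e.2).1)
        - ((pbar e.1).1 + (t e.1 - tlo e.1) * (vel e.1).1) with hlxdef
    set ly : Node α × Node α → ℝ := fun e =>
      ((pbar e.2).2 + (t e.2 - tlo e.2) * (vel e.2).2)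
        - ((pbar e.1).2 + (t e.1 - tlo e.1) * (vel e.1).2) with hlydef
    have hlxpt : ∀ e : Node α × Node α, lx e = (pt e.2).1.1 - (pt e.1).1.1 := by
      intro e
      rw [hlxdef]
      simp only [hpos e.1, hpos e.2, Prod.fst_add, Prod.smul_fst, smul_eq_mul]
      rfl
    have hlypt : ∀ e : Node α × Node α, ly e = (pt e.2).1.2 - (pt e.1).1.2 := by
      intro e
      rw [hlydef]
      simp only [hpos e.1, hpos e.2, Prod.snd_add, Prod.smul_snd, smul_eq_mul]
      rfl
    refine ⟨∑ e ∈ Efin α, y e * l e,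
      ⟨t, y, fun e => y e * l e, fun e => y e * l e + R * (1 - y e), lx, ly,
        ⟨hwinpt, h1, h2, h3, h4, h5, ?_⟩, rfl⟩, ?_⟩
    · intro e he
      obtain ⟨hz, hz'⟩ := h7 e he
      obtain ⟨hl0, hsp, hcone⟩ := h8 e he
      refine ⟨rfl, rfl, ?_, ?_, ?_, rfl, ?_⟩
      · show (0:ℝ) ≤ y e * l e
        rcases h1 e he with hy | hy
        · rw [hy, zero_mul]
        · rw [hy, one_mul]; exact hl0
      · show (0:ℝ) ≤ y e * l e + R * (1 - y e)
        rcases h1 e he with hy | hy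
        · rw [hy]; simpa using hR0
        · rw [hy]; simpa using hl0
      · show y e * l e ≤ vmax * (t e.2 - t e.1 + T * (1 - y e))
        rcases h1 e he with hy | hy
        · rw [hy, zero_mul]
          have h1' := (hwinpt e.1).2
          have h2' := (hwinpt e.2).1
          have h3' := (hwin e.1).2.2
          have h4' := (hwin e.2).1
          have hnn : 0 ≤ t e.2 - t e.1 + T * (1 - 0) := by
            show 0 ≤ (pt e.2).2 - (pt e.1).2 + T * (1 - 0)
            linarith
          exact mul_nonneg hvmax' hnn
        · rw [hy, one_mul]
          have hz2 : (z e).2 = t e.1 := by rw [hz, hy, one_smul]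
          have hz'2 : (z' e).2 = t e.2 := by rw [hz', hy, one_smul]
          rw [hz2, hz'2] at hsp
          calc l e ≤ vmax * (t e.2 - t e.1) := hsp
            _ = vmax * (t e.2 - t e.1 + T * (1 - 1)) := by ring
      · show lx e ^ 2 + ly e ^ 2 ≤ (y e * l e + R * (1 - y e)) ^ 2
        rcases h1 e he with hy | hy
        · have hsq := hR e.1 e.2 (t e.1) ⟨(hwinpt e.1).1, (hwinpt e.1).2⟩
            (t e.2) ⟨(hwinpt e.2).1, (hwinpt e.2).2⟩
          have hnn : 0 ≤ lx e ^ 2 + ly e ^ 2 := by positivity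
          have hsqR : Real.sqrt (lx e ^ 2 + ly e ^ 2) ≤ R := by
            rw [hlxdef, hlydef]
            exact hsq
          have hle : lx e ^ 2 + ly e ^ 2 ≤ R ^ 2 := by
            calc lx e ^ 2 + ly e ^ 2 = Real.sqrt (lx e ^ 2 + ly e ^ 2) ^ 2 :=
                  (Real.sq_sqrt hnn).symm
              _ ≤ R ^ 2 := by
                  exact pow_le_pow_left₀ (Real.sqrt_nonneg _) hsqR 2
          rw [hy]
          calc lx e ^ 2 + ly e ^ 2 ≤ R ^ 2 := hle
            _ = (0 * l e + R * (1 - 0)) ^ 2 := by ring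
        · have hz1 : (z e).1 = (pt e.1).1 := by rw [hz, hy, one_smul]
          have hz'1 : (z' e).1 = (pt e.2).1 := by rw [hz', hy, one_smul]
          rw [hy]
          have heq : (1 * l e + R * (1 - 1)) = l e := by ring
          rw [heq, hlxpt, hlypt, ← hz1, ← hz'1]
          exact hcone
    · apply Finset.sum_le_sum
      intro e he
      have : (0:ℝ) ≤ l e := (h8 e he).1
      rcases h1 e he with hy | hy
      · show y e * l e ≤ l e
        rw [hy, zero_mul]; exact this
      · show y e * l e ≤ l e
        rw [hy, one_mul]
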